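/- Let T ≥ 1, d ≥ T, and let U ∈ ℝ^{d×T} satisfy UᵀU = I_T. Set R = 230√T, ρ(x) = x/√(1 + ‖x‖²/R²), and f̂(x) = f̄_T(Uᵀρ(x)) + ‖x‖²/10. Then f̂(0) − f̂(x) ≤ 12T for every x ∈ ℝ^d; in particular f̂(0) − inf_x f̂(x) ≤ 12T. -/

import Mathlib

/-- Ψ(x) = 0 for x ≤ 1/2 and Ψ(x) = exp(1 − 1/(2x−1)²) for x > 1/2. -/
noncomputable def Psi (x : ℝ) : ℝ :=
  if x ≤ 1/2 then 0 else Real.exp (1 - 1/(2*x - 1)^2)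

/-- Φ(x) = √e · ∫_{−∞}^x exp(−t²/2) dt. -/
noncomputable def Phi (x : ℝ) : ℝ :=
  Real.sqrt (Real.exp 1) * ∫ t in Set.Iic x, Real.exp (-t^2/2)

/-- 0-based coordinates of `x : ℝ^T` extended by zero. -/
noncomputable def pad (T : ℕ) (x : Fin T → ℝ) (i : ℕ) : ℝ :=
  if h : i < T then x ⟨i, h⟩ else 0

/-- f̄_T(x) = −Ψ(1)Φ(x_1) + Σ_{i=2}^T [Ψ(−x_{i−1})Φ(−x_i) − Ψ(x_{i−1})Φ(x_i)]. -/
noncomputable def fbar (T : ℕ) (x : Fin T → ℝ) : ℝ :=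
  -(Psi 1 * Phi (pad T x 0)) +
    ∑ i ∈ Finset.Ico 1 T,
      (Psi (-(pad T x (i-1))) * Phi (-(pad T x i)) - Psi (pad T x (i-1)) * Phi (pad T x i))

/-- The linear map `x ↦ Uᵀx : ℝ^d → ℝ^T`. -/
noncomputable def Umap {d T : ℕ} (U : Matrix (Fin d) (Fin T) ℝ)
    (x : EuclideanSpace ℝ (Fin d)) : EuclideanSpace ℝ (Fin T) :=
  WithLp.toLp 2 (fun j => ∑ i, U i j * x i)

/-- The `j`-th column `u^{(j)}` of `U`. -/
noncomputable def col {d T : ℕ} (U : Matrix (Fin d) (Fin T) ℝ) (j : Fin T) :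
    EuclideanSpace ℝ (Fin d) :=
  WithLp.toLp 2 (fun i => U i j)

/-- The soft projection ρ(x) = x/√(1 + ‖x‖²/R²). -/
noncomputable def rho {d : ℕ} (R : ℝ) (x : EuclideanSpace ℝ (Fin d)) :
    EuclideanSpace ℝ (Fin d) :=
  (Real.sqrt (1 + ‖x‖^2 / R^2))⁻¹ • x

/-- f̂(x) = f̄_T(Uᵀρ(x)) + ‖x‖²/10, with R = 230√T. -/
noncomputable def fhat {d T : ℕ} (U : Matrix (Fin d) (Fin T) ℝ)
    (x : EuclideanSpace ℝ (Fin d)) : ℝ :=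
  fbar T (fun j => Umap U (rho (230 * Real.sqrt T) x) j) + ‖x‖^2 / 10


lemma Psi_nonneg (a : ℝ) : 0 ≤ Psi a := by
  unfold Psi; split
  · exact le_refl 0
  · exact (Real.exp_pos _).le

lemma Psi_le (a : ℝ) : Psi a ≤ Real.exp 1 := by
  unfold Psi; split
  · exact (Real.exp_pos 1).le
  · apply Real.exp_le_exp.2
    have : (0:ℝ) ≤ 1/(2*a-1)^2 := by positivity
    linarith

lemma Phi_nonneg (a : ℝ) : 0 ≤ Phi a :=
  mul_nonneg (Real.sqrt_nonneg _)
    (MeasureTheory.setIntegral_nonneg measurableSet_Iic fun t _ => (Real.exp_pos _).le)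

lemma gauss_eq : (fun t : ℝ => Real.exp (-t^2/2)) = fun t : ℝ => Real.exp (-((1:ℝ)/2) * t^2) := by
  funext t; ring_nf

lemma Phi_le (a : ℝ) : Phi a ≤ Real.sqrt (Real.exp 1) * Real.sqrt (2 * Real.pi) := by
  apply mul_le_mul_of_nonneg_left _ (Real.sqrt_nonneg _)
  have hint : MeasureTheory.Integrable (fun t : ℝ => Real.exp (-t^2/2)) := by
    rw [gauss_eq]; exact integrable_exp_neg_mul_sq (by norm_num)
  calc ∫ t in Set.Iic a, Real.exp (-t^2/2)
      ≤ ∫ t : ℝ, Real.exp (-t^2/2) :=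
        MeasureTheory.setIntegral_le_integral hint
          (Filter.Eventually.of_forall fun t => (Real.exp_pos _).le)
    _ = Real.sqrt (2 * Real.pi) := by
        rw [gauss_eq, integral_gaussian]
        rw [show Real.pi / (1/2) = 2 * Real.pi by ring]

lemma prod_le_twelve (a b : ℝ) : Psi a * Phi b ≤ 12 := by
  have h1 := Psi_le a
  have h2 := Phi_le b
  have h3 := Phi_nonneg b
  have h4 := Psi_nonneg a
  have he : Real.exp 1 ≤ 2.7182818286 := Real.exp_one_lt_d9.le
  have hpi : Real.pi ≤ 3.15 := by linarith [Real.pi_lt_d2]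
  set s := Real.sqrt (Real.exp 1) with hs
  set t := Real.sqrt (2 * Real.pi) with ht
  have hs0 : 0 ≤ s := Real.sqrt_nonneg _
  have ht0 : 0 ≤ t := Real.sqrt_nonneg _
  have hs2 : s^2 = Real.exp 1 := Real.sq_sqrt (Real.exp_pos 1).le
  have ht2 : t^2 = 2 * Real.pi := Real.sq_sqrt (by positivity)
  have hsb : s ≤ 1.649 := by nlinarith
  have htb : t ≤ 2.51 := by nlinarith
  calc Psi a * Phi b ≤ Real.exp 1 * (s * t) := by
        apply mul_le_mul h1 h2 h3 (Real.exp_pos 1).le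
    _ ≤ 12 := by nlinarith

lemma Psi_zero : Psi 0 = 0 := by unfold Psi; norm_num

lemma fbar_lb (T : ℕ) (hT : 1 ≤ T) (y : Fin T → ℝ) : -(12 * T) ≤ fbar T y := by
  unfold fbar
  have h1 : -(12:ℝ) ≤ -(Psi 1 * Phi (pad T y 0)) := neg_le_neg (prod_le_twelve _ _)
  have h2 : ∀ i ∈ Finset.Ico 1 T, (-12 : ℝ) ≤
      Psi (-(pad T y (i-1))) * Phi (-(pad T y i)) - Psi (pad T y (i-1)) * Phi (pad T y i) := by
    intro i _
    have ha := prod_le_twelve (pad T y (i-1)) (pad T y i)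
    have hb := mul_nonneg (Psi_nonneg (-(pad T y (i-1)))) (Phi_nonneg (-(pad T y i)))
    linarith
  have hsum : ∑ i ∈ Finset.Ico 1 T, (-12 : ℝ) ≤
      ∑ i ∈ Finset.Ico 1 T,
        (Psi (-(pad T y (i-1))) * Phi (-(pad T y i)) - Psi (pad T y (i-1)) * Phi (pad T y i)) :=
    Finset.sum_le_sum h2
  rw [Finset.sum_const, Nat.card_Ico] at hsum
  have hc : ((T - 1 : ℕ) : ℝ) = (T : ℝ) - 1 := by
    push_cast [Nat.cast_sub hT]; ring
  rw [nsmul_eq_mul, hc] at hsum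
  linarith

lemma fhat_zero_le {d T : ℕ} (U : Matrix (Fin d) (Fin T) ℝ) : fhat U 0 ≤ 0 := by
  have hy : (fun j => Umap U (rho (230 * Real.sqrt T) (0 : EuclideanSpace ℝ (Fin d))) j)
      = fun _ : Fin T => (0:ℝ) := by
    funext j
    simp [Umap, rho, smul_zero]
  rw [fhat, hy]
  have hpad : ∀ k : ℕ, pad T (fun _ : Fin T => (0:ℝ)) k = 0 := by
    intro k; unfold pad; split <;> rfl
  have hfb : fbar T (fun _ => 0) = -(Psi 1 * Phi 0) := by
    unfold fbar
    simp [hpad, Psi_zero]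
  rw [hfb]
  simp
  exact mul_nonneg (Psi_nonneg 1) (Phi_nonneg 0)

/-- If `UᵀU = I_T` then f̂(0) − f̂(x) ≤ 12T for every x (in particular
f̂(0) − inf f̂ ≤ 12T). -/
theorem stmt16 (T d : ℕ) (hT : 1 ≤ T) (hd : T ≤ d)
    (U : Matrix (Fin d) (Fin T) ℝ) (hU : U.transpose * U = 1)
    (x : EuclideanSpace ℝ (Fin d)) :
    fhat U 0 - fhat U x ≤ 12 * T := by
  have h0 := fhat_zero_le (T := T) U
  have hx : -(12 * (T:ℝ)) ≤ fhat U x := by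
    rw [fhat]
    have := fbar_lb T hT (fun j => Umap U (rho (230 * Real.sqrt T) x) j)
    have hn : (0:ℝ) ≤ ‖x‖^2 / 10 := by positivity
    linarith
  linarith
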